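/- Let H = p₁² + p₂² + b₁√x₁ + b₂x₂ on the phase space with coordinates (x₁,x₂,p₁,p₂), x₁ > 0, b₂ ≠ 0. Then K⁽²⁾ = p₂² + b₂x₂ and K⁽³⁾ = p₁³ + (3/2)b₁√x₁ p₁ − (3b₁²/(4b₂)) p₂ both Poisson-commute with H. -/

import Mathlib

open Finset

/-- Canonical Poisson bracket on phase space ℝ²ⁿ = (Fin n → ℝ) × (Fin n → ℝ). -/
noncomputable def pb {n : ℕ} (f g : (Fin n → ℝ) × (Fin n → ℝ) → ℝ) :
    (Fin n → ℝ) × (Fin n → ℝ) → ℝ := fun z =>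
  ∑ j : Fin n,
    (fderiv ℝ f z ((Pi.single j 1 : Fin n → ℝ), 0) * fderiv ℝ g z (0, (Pi.single j 1 : Fin n → ℝ)) -
     fderiv ℝ f z (0, (Pi.single j 1 : Fin n → ℝ)) * fderiv ℝ g z ((Pi.single j 1 : Fin n → ℝ), 0))


set_option maxHeartbeats 1000000 in
/-- For H = p₁² + p₂² + b₁√x₁ + b₂x₂ (x₁ > 0, b₂ ≠ 0), both K⁽²⁾ = p₂² + b₂x₂ and
K⁽³⁾ = p₁³ + (3/2)b₁√x₁ p₁ − (3b₁²/(4b₂)) p₂ Poisson-commute with H. -/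
theorem stmt17 (b₁ b₂ : ℝ) (hb₂ : b₂ ≠ 0) :
    ∀ z : (Fin 2 → ℝ) × (Fin 2 → ℝ), 0 < z.1 0 →
      pb (fun z => (z.2 1) ^ 2 + b₂ * z.1 1)
        (fun z => (z.2 0) ^ 2 + (z.2 1) ^ 2 + b₁ * Real.sqrt (z.1 0) + b₂ * z.1 1) z = 0 ∧
      pb (fun z => (z.2 0) ^ 3 + (3 / 2) * b₁ * Real.sqrt (z.1 0) * z.2 0
          - (3 * b₁ ^ 2 / (4 * b₂)) * z.2 1)
        (fun z => (z.2 0) ^ 2 + (z.2 1) ^ 2 + b₁ * Real.sqrt (z.1 0) + b₂ * z.1 1) z = 0 := by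
  intro z hz
  set s := Real.sqrt (z.1 0) with hs
  have hspos : 0 < s := Real.sqrt_pos.mpr hz
  have hsne : s ≠ 0 := hspos.ne'
  have hX0 : HasFDerivAt (fun z : (Fin 2 → ℝ) × (Fin 2 → ℝ) => z.1 0)
      ((ContinuousLinearMap.proj 0).comp (ContinuousLinearMap.fst ℝ (Fin 2 → ℝ) (Fin 2 → ℝ))) z :=
    ((ContinuousLinearMap.proj 0).comp (ContinuousLinearMap.fst ℝ (Fin 2 → ℝ) (Fin 2 → ℝ))).hasFDerivAt
  have hX1 : HasFDerivAt (fun z : (Fin 2 → ℝ) × (Fin 2 → ℝ) => z.1 1)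
      ((ContinuousLinearMap.proj 1).comp (ContinuousLinearMap.fst ℝ (Fin 2 → ℝ) (Fin 2 → ℝ))) z :=
    ((ContinuousLinearMap.proj 1).comp (ContinuousLinearMap.fst ℝ (Fin 2 → ℝ) (Fin 2 → ℝ))).hasFDerivAt
  have hP0 : HasFDerivAt (fun z : (Fin 2 → ℝ) × (Fin 2 → ℝ) => z.2 0)
      ((ContinuousLinearMap.proj 0).comp (ContinuousLinearMap.snd ℝ (Fin 2 → ℝ) (Fin 2 → ℝ))) z :=
    ((ContinuousLinearMap.proj 0).comp (ContinuousLinearMap.snd ℝ (Fin 2 → ℝ) (Fin 2 → ℝ))).hasFDerivAt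
  have hP1 : HasFDerivAt (fun z : (Fin 2 → ℝ) × (Fin 2 → ℝ) => z.2 1)
      ((ContinuousLinearMap.proj 1).comp (ContinuousLinearMap.snd ℝ (Fin 2 → ℝ) (Fin 2 → ℝ))) z :=
    ((ContinuousLinearMap.proj 1).comp (ContinuousLinearMap.snd ℝ (Fin 2 → ℝ) (Fin 2 → ℝ))).hasFDerivAt
  have hsq : HasFDerivAt (fun z : (Fin 2 → ℝ) × (Fin 2 → ℝ) => Real.sqrt (z.1 0))
      ((1 / (2 * s)) •
        ((ContinuousLinearMap.proj 0).comp (ContinuousLinearMap.fst ℝ (Fin 2 → ℝ) (Fin 2 → ℝ)))) z := by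
    have := (Real.hasDerivAt_sqrt hz.ne').comp_hasFDerivAt z hX0
    rw [hs]; simpa [Function.comp_def] using this
  have hP0sq : HasFDerivAt (fun z : (Fin 2 → ℝ) × (Fin 2 → ℝ) => (z.2 0) ^ 2)
      (z.2 0 • ((ContinuousLinearMap.proj 0).comp (ContinuousLinearMap.snd ℝ (Fin 2 → ℝ) (Fin 2 → ℝ)))
        + z.2 0 • ((ContinuousLinearMap.proj 0).comp (ContinuousLinearMap.snd ℝ (Fin 2 → ℝ) (Fin 2 → ℝ)))) z := by
    simp only [pow_two]; exact hP0.mul hP0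
  have hP1sq : HasFDerivAt (fun z : (Fin 2 → ℝ) × (Fin 2 → ℝ) => (z.2 1) ^ 2)
      (z.2 1 • ((ContinuousLinearMap.proj 1).comp (ContinuousLinearMap.snd ℝ (Fin 2 → ℝ) (Fin 2 → ℝ)))
        + z.2 1 • ((ContinuousLinearMap.proj 1).comp (ContinuousLinearMap.snd ℝ (Fin 2 → ℝ) (Fin 2 → ℝ)))) z := by
    simp only [pow_two]; exact hP1.mul hP1
  have hP0cube : HasFDerivAt (fun z : (Fin 2 → ℝ) × (Fin 2 → ℝ) => (z.2 0) ^ 3)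
      ((z.2 0 * z.2 0) • ((ContinuousLinearMap.proj 0).comp (ContinuousLinearMap.snd ℝ (Fin 2 → ℝ) (Fin 2 → ℝ)))
        + z.2 0 • (z.2 0 • ((ContinuousLinearMap.proj 0).comp (ContinuousLinearMap.snd ℝ (Fin 2 → ℝ) (Fin 2 → ℝ)))
          + z.2 0 • ((ContinuousLinearMap.proj 0).comp (ContinuousLinearMap.snd ℝ (Fin 2 → ℝ) (Fin 2 → ℝ))))) z := by
    simp only [pow_succ, pow_zero, one_mul]
    exact (hP0.mul hP0).mul hP0
  have hH := ((hP0sq.add hP1sq).add (hsq.const_mul b₁)).add (hX1.const_mul b₂)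
  have hK2 := hP1sq.add (hX1.const_mul b₂)
  have hK3 := (hP0cube.add ((hsq.const_mul (3 / 2 * b₁)).mul hP0)).sub
    (hP1.const_mul (3 * b₁ ^ 2 / (4 * b₂)))
  constructor
  · rw [pb, show fderiv ℝ (fun z : (Fin 2 → ℝ) × (Fin 2 → ℝ) => (z.2 1) ^ 2 + b₂ * z.1 1) z = _ from hK2.fderiv, show fderiv ℝ (fun z : (Fin 2 → ℝ) × (Fin 2 → ℝ) => (z.2 0) ^ 2 + (z.2 1) ^ 2 + b₁ * Real.sqrt (z.1 0) + b₂ * z.1 1) z = _ from hH.fderiv]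
    simp [Fin.sum_univ_two, Pi.single_apply]
    ring
  · rw [pb, show fderiv ℝ (fun z : (Fin 2 → ℝ) × (Fin 2 → ℝ) => (z.2 0) ^ 3 + (3 / 2) * b₁ * Real.sqrt (z.1 0) * z.2 0 - (3 * b₁ ^ 2 / (4 * b₂)) * z.2 1) z = _ from hK3.fderiv, show fderiv ℝ (fun z : (Fin 2 → ℝ) × (Fin 2 → ℝ) => (z.2 0) ^ 2 + (z.2 1) ^ 2 + b₁ * Real.sqrt (z.1 0) + b₂ * z.1 1) z = _ from hH.fderiv]
    simp [Fin.sum_univ_two, Pi.single_apply]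
    field_simp
    ring
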